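/- Let a, f ≥ 1 and let v ∈ ℂ^{a·f} be a vector indexed by pairs (i,j) ∈ Fin a × Fin f, and let X = v v† be the associated rank-one positive semidefinite matrix on ℂ^a ⊗ ℂ^f, i.e., X((i,j),(k,l)) = v(i,j) · conj(v(k,l)). Then |τ_F(X)| = √(tr_F X) ⊗ (√(tr_A X))ᵀ, where τ_F is the partial transpose on the second factor, tr_F and tr_A are the partial traces, √ denotes the positive semidefinite square root of a positive semidefinite matrix, ᵀ denotes matrix transpose, and ⊗ is the Kronecker product. -/

import Mathlib

open scoped BigOperators Kronecker ComplexOrder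
open Matrix

/-- von Neumann entropy of a matrix (via eigenvalues when Hermitian, else 0). -/
noncomputable def vnEntropy {ι : Type*} [Fintype ι] [DecidableEq ι]
    (ρ : Matrix ι ι ℂ) : ℝ :=
  if h : ρ.IsHermitian then -∑ i, h.eigenvalues i * Real.log (h.eigenvalues i) else 0

/-- Twirling operation induced by a family of matrices indexed by a finite group. -/
noncomputable def twirl {G ι : Type*} [Fintype G] [Fintype ι]
    (U : G → Matrix ι ι ℂ) (X : Matrix ι ι ℂ) : Matrix ι ι ℂ :=
  (Fintype.card G : ℂ)⁻¹ • ∑ g, U g * X * (U g)ᴴ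

/-- Apply a real function spectrally to a Hermitian matrix (0 otherwise). -/
noncomputable def matFun {ι : Type*} [Fintype ι] [DecidableEq ι]
    (f : ℝ → ℝ) (ρ : Matrix ι ι ℂ) : Matrix ι ι ℂ :=
  if h : ρ.IsHermitian then
    (h.eigenvectorUnitary : Matrix ι ι ℂ) *
      Matrix.diagonal (fun i => (f (h.eigenvalues i) : ℂ)) *
      (star (h.eigenvectorUnitary : Matrix ι ι ℂ))
  else 0

/-- Spectral power `ρ ^ t` with the convention `0 ^ t = 0`. -/
noncomputable def matPow {ι : Type*} [Fintype ι] [DecidableEq ι]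
    (ρ : Matrix ι ι ℂ) (t : ℝ) : Matrix ι ι ℂ :=
  matFun (fun x => if x = 0 then 0 else x ^ t) ρ

/-- Spectral logarithm with the convention `log 0 = 0`. -/
noncomputable def matLog {ι : Type*} [Fintype ι] [DecidableEq ι]
    (ρ : Matrix ι ι ℂ) : Matrix ι ι ℂ :=
  matFun Real.log ρ

/-- Absolute value `|M| = √(MᴴM)`. -/
noncomputable def matAbs {ι : Type*} [Fintype ι] [DecidableEq ι]
    (M : Matrix ι ι ℂ) : Matrix ι ι ℂ :=
  matPow (Mᴴ * M) (1/2 : ℝ)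


/-- Partial trace over the second (F) factor. -/
noncomputable def ptraceF {α β : Type*} [Fintype β]
    (X : Matrix (α × β) (α × β) ℂ) : Matrix α α ℂ :=
  fun i k => ∑ j, X (i, j) (k, j)

/-- Partial trace over the first (A) factor. -/
noncomputable def ptraceA {α β : Type*} [Fintype α]
    (X : Matrix (α × β) (α × β) ℂ) : Matrix β β ℂ :=
  fun j l => ∑ i, X (i, j) (i, l)

/-- Partial transpose on the second (F) factor. -/
def ptransF {α β : Type*} (X : Matrix (α × β) (α × β) ℂ) :
    Matrix (α × β) (α × β) ℂ :=
  fun p q => X (p.1, q.2) (q.1, p.2)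

/-- Quantum Rényi entropy `H_β(ρ) = (1/(1−β)) log tr[ρ^β]`. -/
noncomputable def renyiEntropy {ι : Type*} [Fintype ι] [DecidableEq ι]
    (β : ℝ) (ρ : Matrix ι ι ℂ) : ℝ :=
  (1 - β)⁻¹ * Real.log ((matPow ρ β).trace.re)

noncomputable def Matrix.PosSemidef.sqrt {n : Type*} [Fintype n] [DecidableEq n]
    {A : Matrix n n ℂ} (hA : A.PosSemidef) : Matrix n n ℂ :=
  (hA.1.eigenvectorUnitary : Matrix n n ℂ) *
    diagonal (RCLike.ofReal ∘ Real.sqrt ∘ hA.1.eigenvalues) *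
    (star (hA.1.eigenvectorUnitary : Matrix n n ℂ))

open scoped MatrixOrder in
lemma Matrix.PosSemidef.sqrt_eq_cfcSqrt {n : Type*} [Fintype n] [DecidableEq n]
    {A : Matrix n n ℂ} (hA : A.PosSemidef) : hA.sqrt = CFC.sqrt A := by
  have h0 : 0 ≤ A := hA.nonneg
  rw [CFC.sqrt_eq_cfc, cfc_nnreal_eq_real _ A, hA.1.cfc_eq, IsHermitian.cfc,
    Matrix.PosSemidef.sqrt, Unitary.conjStarAlgAut_apply]
  congr 3
  funext i
  simp [Real.coe_toNNReal _ (hA.eigenvalues_nonneg i)]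
  rw [max_eq_left (hA.eigenvalues_nonneg i)]

open scoped MatrixOrder in
lemma Matrix.PosSemidef.posSemidef_sqrt {n : Type*} [Fintype n] [DecidableEq n]
    {A : Matrix n n ℂ} (hA : A.PosSemidef) : hA.sqrt.PosSemidef := by
  rw [hA.sqrt_eq_cfcSqrt]
  exact (CFC.sqrt_nonneg A).posSemidef

open scoped MatrixOrder in
lemma Matrix.PosSemidef.sq_sqrt {n : Type*} [Fintype n] [DecidableEq n]
    {A : Matrix n n ℂ} (hA : A.PosSemidef) : hA.sqrt ^ 2 = A := by
  have h0 : 0 ≤ A := hA.nonneg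
  rw [hA.sqrt_eq_cfcSqrt, CFC.sq_sqrt A]

open scoped MatrixOrder in
lemma Matrix.PosSemidef.eq_sqrt_of_sq_eq {n : Type*} [Fintype n] [DecidableEq n]
    {B : Matrix n n ℂ} (hB : B.PosSemidef) {A : Matrix n n ℂ} {hA : A.PosSemidef}
    (h : B ^ 2 = A) : B = hA.sqrt := by
  have h0 : 0 ≤ B := hB.nonneg
  rw [hA.sqrt_eq_cfcSqrt, ← h, CFC.sqrt_sq B]

lemma matPow_half_eq_sqrt {ι : Type*} [Fintype ι] [DecidableEq ι]
    {ρ : Matrix ι ι ℂ} (hρ : ρ.PosSemidef) :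
    matPow ρ (1/2 : ℝ) = hρ.sqrt := by
  rw [matPow, matFun, dif_pos hρ.1, Matrix.PosSemidef.sqrt]
  refine congrArg₂ _ (congrArg₂ _ rfl (congrArg Matrix.diagonal (funext fun i => ?_))) rfl
  show ((if hρ.1.eigenvalues i = 0 then 0 else hρ.1.eigenvalues i ^ (1/2:ℝ) : ℝ) : ℂ)
      = (RCLike.ofReal ∘ Real.sqrt ∘ hρ.1.eigenvalues) i
  simp only [Function.comp_apply]
  split_ifs with h
  · simp [h]
  · rw [Real.sqrt_eq_rpow]; norm_cast

lemma sqrt_transpose {ι : Type*} [Fintype ι] [DecidableEq ι]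
    {B : Matrix ι ι ℂ} (hB : B.PosSemidef) :
    (hB.sqrt)ᵀ = hB.transpose.sqrt := by
  apply Matrix.PosSemidef.eq_sqrt_of_sq_eq hB.posSemidef_sqrt.transpose
  rw [pow_two, ← Matrix.transpose_mul, ← pow_two, hB.sq_sqrt]

lemma kron_conjTranspose {ι κ : Type*} (A : Matrix ι ι ℂ) (B : Matrix κ κ ℂ) :
    (A ⊗ₖ B)ᴴ = Aᴴ ⊗ₖ Bᴴ := by
  ext ⟨i, j⟩ ⟨k, l⟩
  simp [Matrix.conjTranspose_apply]

lemma kron_psd {ι κ : Type*} [Fintype ι] [DecidableEq ι] [Fintype κ] [DecidableEq κ]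
    {A : Matrix ι ι ℂ} {B : Matrix κ κ ℂ} (hA : A.PosSemidef) (hB : B.PosSemidef) :
    (A ⊗ₖ B).PosSemidef := by
  have hQA := hA.posSemidef_sqrt
  have hQB := hB.posSemidef_sqrt
  have h : A ⊗ₖ B = (hA.sqrt ⊗ₖ hB.sqrt)ᴴ * (hA.sqrt ⊗ₖ hB.sqrt) := by
    rw [kron_conjTranspose, hQA.1, hQB.1, ← Matrix.mul_kronecker_mul,
      ← pow_two, ← pow_two, hA.sq_sqrt, hB.sq_sqrt]
  rw [h]
  exact Matrix.posSemidef_conjTranspose_mul_self _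

lemma kron_sqrt {ι κ : Type*} [Fintype ι] [DecidableEq ι] [Fintype κ] [DecidableEq κ]
    {A : Matrix ι ι ℂ} {B : Matrix κ κ ℂ} (hA : A.PosSemidef) (hB : B.PosSemidef) :
    (kron_psd hA hB).sqrt = hA.sqrt ⊗ₖ hB.sqrt := by
  symm
  apply Matrix.PosSemidef.eq_sqrt_of_sq_eq (kron_psd hA.posSemidef_sqrt hB.posSemidef_sqrt)
  rw [pow_two, ← Matrix.mul_kronecker_mul, ← pow_two, ← pow_two, hA.sq_sqrt, hB.sq_sqrt]


/-- Eq. (M6): for a rank-one positive semidefinite bipartite operator `X = vv†`,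
`|τ_F(X)| = √(tr_F X) ⊗ (√(tr_A X))ᵀ`. -/
theorem abs_ptransF_rank_one {a f : ℕ} (ha : 1 ≤ a) (hf : 1 ≤ f)
    (v : Fin a × Fin f → ℂ) :
    matAbs (ptransF (Matrix.vecMulVec v (star v)))
      = matPow (ptraceF (Matrix.vecMulVec v (star v))) (1/2 : ℝ) ⊗ₖ
          (matPow (ptraceA (Matrix.vecMulVec v (star v))) (1/2 : ℝ))ᵀ := by
  set X := Matrix.vecMulVec v (star v) with hX
  set M : Matrix (Fin a) (Fin f) ℂ := Matrix.of (fun i j => v (i, j)) with hM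
  have hFeq : ptraceF X = M * Mᴴ := by
    ext i k
    simp [ptraceF, Matrix.mul_apply, Matrix.vecMulVec_apply, hX, hM]
  have hAeq : ptraceA X = (Mᴴ * M)ᵀ := by
    ext j l
    simp only [ptraceA, Matrix.transpose_apply, Matrix.mul_apply,
      Matrix.conjTranspose_apply, Matrix.vecMulVec_apply, hX, hM, Matrix.of_apply,
      Pi.star_apply]
    exact Finset.sum_congr rfl fun i _ => mul_comm _ _
  have hF : (ptraceF X).PosSemidef := by
    rw [hFeq]; exact Matrix.posSemidef_self_mul_conjTranspose M
  have hA : (ptraceA X).PosSemidef := by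
    rw [hAeq]; exact (Matrix.posSemidef_conjTranspose_mul_self M).transpose
  have key : (ptransF X)ᴴ * (ptransF X) = (ptraceF X) ⊗ₖ (ptraceA X)ᵀ := by
    ext ⟨i, j⟩ ⟨k, l⟩
    simp only [Matrix.mul_apply, Matrix.conjTranspose_apply, ptransF,
      Matrix.kroneckerMap_apply, Matrix.transpose_apply, ptraceF, ptraceA,
      Matrix.vecMulVec_apply, Fintype.sum_prod_type, Pi.star_apply, hX]
    rw [Finset.sum_comm, Finset.sum_mul_sum]
    refine Finset.sum_congr rfl fun n _ => Finset.sum_congr rfl fun m _ => ?_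
    simp only [star_mul', star_star]
    ring
  have hkron := kron_psd hF hA.transpose
  have h1 : matAbs (ptransF X) = hkron.sqrt := by
    rw [matAbs, key]
    exact matPow_half_eq_sqrt hkron
  rw [h1, matPow_half_eq_sqrt hF, matPow_half_eq_sqrt hA, sqrt_transpose hA]
  exact kron_sqrt hF hA.transpose
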